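/- arXiv:0807.0271 — 11 statements merged into one kernel-verified Lean document; each statement's English description precedes it below -/
import Mathlib

section
/- Let F be a field, d ≥ 0 an integer, q a nonzero element of F, and a, b, c ∈ F. Then the d+1 scalars θ_i = a + b·q^{2i−d} + c·q^{d−2i} (0 ≤ i ≤ d) are mutually distinct if and only if q^{2i} ≠ 1 for 1 ≤ i ≤ d and b ≠ c·q^{2d−2i} for 1 ≤ i ≤ 2d−1. -/
private theorem keylem_aux {F : Type*} [Field F] (a b c x y z : F)
    (hix : x ≠ 0) (hjy : y ≠ 0) (hdz : z ≠ 0) :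
    a + b * (x * x / z) + c * (z / (x * x)) - (a + b * (y * y / z) + c * (z / (y * y))) =
    (y * y / z * (x * x / (y * y)) - y * y / z * 1) * b -
      (y * y / z * (x * x / (y * y)) - y * y / z * 1) * (c * (z * z / (x * x) / (y * y))) := by
  have hx : x * x⁻¹ = 1 := mul_inv_cancel₀ hix
  have hy : y * y⁻¹ = 1 := mul_inv_cancel₀ hjy
  have hz : z * z⁻¹ = 1 := mul_inv_cancel₀ hdz
  simp only [div_eq_mul_inv, mul_inv]
  generalize x⁻¹ = X at *
  generalize y⁻¹ = Y at *
  generalize z⁻¹ = Z at *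
  linear_combination (c*y^2*z^2*Y^4*Z + c*x*y^2*z^2*X*Y^4*Z) * hx +
    (c*z^2*Y^2*Z + (-1)*c*z^2*X^2*Z + c*y*z^2*Y^3*Z + (-1)*c*y*z^2*X^2*Y*Z + (-1)*b*x^2*Z +
      (-1)*b*x^2*y*Y*Z) * hy +
    (c*z*Y^2 + (-1)*c*z*X^2) * hz

private theorem keylem {F : Type*} [Field F] (q a b c : F) (hq : q ≠ 0) (d i j : ℤ) :
    (a + b * q ^ (2 * i - d) + c * q ^ (d - 2 * i)) -
      (a + b * q ^ (2 * j - d) + c * q ^ (d - 2 * j)) =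
    q ^ (2 * j - d) * (q ^ (2 * (i - j)) - 1) * (b - c * q ^ (2 * d - 2 * i - 2 * j)) := by
  have hi : q ^ i ≠ 0 := zpow_ne_zero _ hq
  have hj : q ^ j ≠ 0 := zpow_ne_zero _ hq
  have hd : q ^ d ≠ 0 := zpow_ne_zero _ hq
  simp only [mul_sub, two_mul, zpow_sub₀ hq, zpow_add₀ hq]
  exact keylem_aux a b c _ _ _ hi hj hd

theorem stmt_0 {F : Type*} [Field F] (d : ℕ) (q a b c : F) (hq : q ≠ 0)
    (θ : ℕ → F)
    (hθ : ∀ i : ℕ, i ≤ d → θ i = a + b * q ^ (2 * (i : ℤ) - (d : ℤ)) + c * q ^ ((d : ℤ) - 2 * (i : ℤ))) :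
    (∀ i j : ℕ, i ≤ d → j ≤ d → i ≠ j → θ i ≠ θ j) ↔
      ((∀ i : ℕ, 1 ≤ i → i ≤ d → q ^ (2 * i) ≠ 1) ∧
       (∀ i : ℕ, 1 ≤ i → i ≤ 2 * d - 1 → b ≠ c * q ^ (2 * (d : ℤ) - 2 * (i : ℤ)))) := by
  have key : ∀ i j : ℕ, i ≤ d → j ≤ d →
      θ i - θ j = q ^ (2 * (j : ℤ) - (d : ℤ)) * (q ^ (2 * ((i : ℤ) - (j : ℤ))) - 1) *
        (b - c * q ^ (2 * (d : ℤ) - 2 * (i : ℤ) - 2 * (j : ℤ))) := by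
    intro i j hi hj
    rw [hθ i hi, hθ j hj]
    exact keylem q a b c hq d i j
  constructor
  · intro h
    constructor
    · intro k hk1 hkd
      have h0 : θ k - θ 0 ≠ 0 := sub_ne_zero_of_ne (h k 0 hkd (Nat.zero_le d) (by omega))
      rw [key k 0 hkd (Nat.zero_le d)] at h0
      have h2 : q ^ (2 * ((k : ℤ) - (0 : ℕ))) - 1 ≠ 0 :=
        fun hz => h0 (by rw [hz]; ring)
      intro hcon
      apply h2
      rw [sub_eq_zero]
      rw [← hcon, ← zpow_natCast q (2 * k)]
      congr 1
      all_goals (push_cast; try ring)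
    · intro k hk1 hk2d
      by_cases hkd : k ≤ d
      · have h0 : θ k - θ 0 ≠ 0 := sub_ne_zero_of_ne (h k 0 hkd (Nat.zero_le d) (by omega))
        rw [key k 0 hkd (Nat.zero_le d)] at h0
        have h2 : b - c * q ^ (2 * (d : ℤ) - 2 * (k : ℤ) - 2 * ((0 : ℕ) : ℤ)) ≠ 0 :=
          fun hz => h0 (by rw [hz]; ring)
        intro hcon
        apply h2
        rw [sub_eq_zero, hcon]
        congr 1
        all_goals (push_cast; try ring)
      · have hd1 : d + 1 ≤ k := by omega
        have hkd' : k - d ≤ d := by omega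
        have hne : d ≠ k - d := by omega
        have h0 : θ d - θ (k - d) ≠ 0 :=
          sub_ne_zero_of_ne (h d (k - d) le_rfl hkd' hne)
        rw [key d (k - d) le_rfl hkd'] at h0
        have h2 : b - c * q ^ (2 * (d : ℤ) - 2 * ((d : ℕ) : ℤ) - 2 * (((k - d : ℕ)) : ℤ)) ≠ 0 :=
          fun hz => h0 (by rw [hz]; ring)
        intro hcon
        apply h2
        rw [sub_eq_zero, hcon]
        congr 1
        have : ((k - d : ℕ) : ℤ) = (k : ℤ) - (d : ℤ) := by
          push_cast [Nat.cast_sub (by omega : d ≤ k)]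
          ring
        rw [this]
        ring
  · rintro ⟨h1, h2⟩
    have main : ∀ i j : ℕ, i ≤ d → j ≤ d → j < i → θ i ≠ θ j := by
      intro i j hi hj hlt heq
      have hsub : θ i - θ j = 0 := sub_eq_zero.mpr heq
      rw [key i j hi hj] at hsub
      rcases mul_eq_zero.mp hsub with h' | h'
      · rcases mul_eq_zero.mp h' with h'' | h''
        · exact zpow_ne_zero _ hq h''
        · apply h1 (i - j) (by omega) (by omega)
          rw [← zpow_natCast q (2 * (i - j))]
          have hc : ((2 * (i - j) : ℕ) : ℤ) = 2 * ((i : ℤ) - (j : ℤ)) := by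
            push_cast [Nat.cast_sub hlt.le]
            ring
          rw [hc]
          exact sub_eq_zero.mp h''
      · apply h2 (i + j) (by omega) (by omega)
        have hb : b = c * q ^ (2 * (d : ℤ) - 2 * (i : ℤ) - 2 * (j : ℤ)) := sub_eq_zero.mp h'
        rw [hb]
        congr 1
        all_goals (push_cast; try ring)
    intro i j hi hj hij
    rcases Nat.lt_or_ge j i with hlt | hge
    · exact main i j hi hj hlt
    · exact (main j i hj hi (by omega)).symm
end

section
/- Let θ_0, …, θ_d be elements of a field F and define, in F[λ], the polynomials τ_i(λ) = (λ−θ_0)(λ−θ_1)⋯(λ−θ_{i−1}) and η_i(λ) = (λ−θ_d)(λ−θ_{d−1})⋯(λ−θ_{d−i+1}). Then η_d = Σ_{i=0}^d η_{d−i}(θ_0) · τ_i, where η_{d−i}(θ_0) denotes the evaluation of the polynomial η_{d−i} at θ_0. -/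
open Polynomial Finset

theorem stmt_4 {F : Type*} [CommRing F] (d : ℕ) (θ : ℕ → F)
    (τ η : ℕ → Polynomial F)
    (hτ : ∀ i : ℕ, τ i = ∏ j ∈ Finset.range i, (X - C (θ j)))
    (hη : ∀ i : ℕ, η i = ∏ j ∈ Finset.range i, (X - C (θ (d - j)))) :
    η d = ∑ i ∈ Finset.range (d + 1), C ((η (d - i)).eval (θ 0)) * τ i := by
  have heval : ∀ n : ℕ, (η n).eval (θ 0) = ∏ j ∈ Finset.range n, (θ 0 - θ (d - j)) := by
    intro n
    simp [hη n, eval_prod]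
  have key : ∀ k : ℕ, k ≤ d →
      ∑ i ∈ Finset.range (k + 1), C ((η (d - i)).eval (θ 0)) * τ i =
        C (∏ j ∈ Finset.range (d - k), (θ 0 - θ (d - j))) *
          ∏ j ∈ Finset.range k, (X - C (θ (j + 1))) := by
    intro k hk
    induction k with
    | zero => simp [heval, hτ]
    | succ k ih =>
      have hk' : k ≤ d := Nat.le_of_succ_le hk
      rw [Finset.sum_range_succ, ih hk']
      have h1 : d - k = (d - (k + 1)) + 1 := by omega
      have h2 : d - (d - (k + 1)) = k + 1 := by omega
      rw [heval, hτ, h1,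
        Finset.prod_range_succ (fun x => θ 0 - θ (d - x)) (d - (k + 1)), h2,
        Finset.prod_range_succ' (fun j => X - C (θ j)) k,
        Finset.prod_range_succ (fun j => X - C (θ (j + 1))) k]
      simp only [map_mul, map_sub]
      ring
  rw [key d le_rfl]
  simp only [Nat.sub_self, Finset.range_zero, Finset.prod_empty, map_one, one_mul, hη]
  rw [← Finset.prod_range_reflect]
  apply Finset.prod_congr rfl
  intro j hj
  have : d - (d - 1 - j) = j + 1 := by
    simp only [Finset.mem_range] at hj; omega
  rw [this]
end

section
/- Let V be a finite-dimensional vector space over a field F, let θ_0, …, θ_d be mutually distinct elements of F, and let U_0, …, U_d be subspaces with V = U_0 ⊕ ⋯ ⊕ U_d. Suppose A : V → V is a linear map satisfying (A − θ_i)U_i ⊆ U_{i+1} for 0 ≤ i ≤ d (with U_{d+1} = 0). Then A is diagonalizable on V, its eigenvalues are exactly θ_0, …, θ_d (assuming each U_i ≠ 0), and for each i the eigenspace of A for θ_i has dimension equal to dim U_i. -/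
open Polynomial Module

lemma aux_finrank_biSup {K V ι : Type*} [Field K] [AddCommGroup V] [Module K V]
    [FiniteDimensional K V] [DecidableEq ι] (p : ι → Submodule K V) (h : iSupIndep p)
    (s : Finset ι) :
    Module.finrank K ↥(⨆ i ∈ s, p i) = ∑ i ∈ s, Module.finrank K ↥(p i) := by
  induction s using Finset.induction_on with
  | empty => simp
  | insert a s ha ih =>
    rw [Finset.sum_insert ha, ← ih, Finset.iSup_insert]
    have hdisj : Disjoint (p a) (⨆ i ∈ s, p i) := by
      refine (h a).mono_right ?_
      exact iSup₂_le fun i hi => le_iSup₂ (f := fun i (_ : i ≠ a) => p i) i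
        (ne_of_mem_of_not_mem hi ha)
    have := Submodule.finrank_sup_add_finrank_inf_eq (p a) (⨆ i ∈ s, p i)
    rw [hdisj.eq_bot, finrank_bot] at this
    omega

set_option maxHeartbeats 1000000 in
theorem stmt_5 {F V : Type*} [Field F] [AddCommGroup V] [Module F V]
    [FiniteDimensional F V] (d : ℕ) (A : Module.End F V) (θ : ℕ → F)
    (hθ : ∀ i j : ℕ, i ≤ d → j ≤ d → i ≠ j → θ i ≠ θ j)
    (U : ℕ → Submodule F V)
    (hUne : ∀ i : ℕ, i ≤ d → U i ≠ ⊥)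
    (hUdirect : DirectSum.IsInternal (fun i : Fin (d + 1) => U i))
    (hUd1 : U (d + 1) = ⊥)
    (hA : ∀ i : ℕ, i ≤ d → ∀ v ∈ U i, A v - θ i • v ∈ U (i + 1)) :
    (⨆ i ∈ Finset.range (d + 1), Module.End.eigenspace A (θ i)) = ⊤ ∧
    (∀ i : ℕ, i ≤ d → Module.End.HasEigenvalue A (θ i)) ∧
    (∀ μ : F, Module.End.HasEigenvalue A μ → ∃ i : ℕ, i ≤ d ∧ μ = θ i) ∧
    (∀ i : ℕ, i ≤ d →
      Module.finrank F (Module.End.eigenspace A (θ i)) = Module.finrank F (U i)) := by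
  classical
  set E : ℕ → Submodule F V := fun i => Module.End.eigenspace A (θ i) with hE
  -- aeval of X - C c
  have haev : ∀ (c : F) (v : V), (aeval A (X - C c)) v = A v - c • v := by
    intro c v
    simp [map_sub, aeval_X, aeval_C, Module.algebraMap_end_apply, LinearMap.sub_apply]
  -- the tail subspaces
  set W : ℕ → Submodule F V := fun i => ⨆ j ∈ Finset.Icc i d, U j with hW
  have hUleW : ∀ i j, i ≤ j → j ≤ d + 1 → U j ≤ W i := by
    intro i j hij hjd
    rcases Nat.lt_or_ge j (d+1) with h | h
    · exact le_iSup₂ (f := fun j (_ : j ∈ Finset.Icc i d) => U j) j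
        (Finset.mem_Icc.mpr ⟨hij, by omega⟩)
    · have : j = d + 1 := by omega
      rw [this, hUd1]; exact bot_le
  have hWA : ∀ i, ∀ w ∈ W i, A w ∈ W i := by
    intro i w hw
    have hmap : Submodule.map A (W i) ≤ W i := by
      rw [hW]
      simp only [Submodule.map_iSup]
      refine iSup₂_le fun j hj => ?_
      rw [Finset.mem_Icc] at hj
      rintro _ ⟨v, hv, rfl⟩
      have hAv : A v = θ j • v + (A v - θ j • v) := by abel
      rw [hAv]
      exact Submodule.add_mem _
        (hUleW i j hj.1 (by omega) (Submodule.smul_mem _ _ hv))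
        (hUleW i (j+1) (by omega) (by omega) (hA j hj.2 v hv))
    exact hmap ⟨w, hw, rfl⟩
  -- key nilpotency lemma
  have key : ∀ n : ℕ, ∀ i, i ≤ d → d - i ≤ n → ∀ v ∈ U i,
      (aeval A (∏ j ∈ Finset.Icc i d, (X - C (θ j)))) v = 0 := by
    intro n
    induction n with
    | zero =>
      intro i hi hn v hv
      have hid : i = d := by omega
      subst hid
      rw [Finset.Icc_self, Finset.prod_singleton, haev]
      have := hA i le_rfl v hv
      rwa [hUd1, Submodule.mem_bot] at this
    | succ n ih =>
      intro i hi hn v hv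
      rcases Nat.eq_or_lt_of_le hi with hid | hid
      · subst hid
        rw [Finset.Icc_self, Finset.prod_singleton, haev]
        have := hA i le_rfl v hv
        rwa [hUd1, Submodule.mem_bot] at this
      · have hicc : Finset.Icc i d = insert i (Finset.Icc (i+1) d) := by
          ext x; simp only [Finset.mem_Icc, Finset.mem_insert]; omega
        rw [hicc, Finset.prod_insert (by simp), mul_comm, map_mul,
          Module.End.mul_apply, haev]
        exact ih (i+1) (by omega) (by omega) _ (hA i (by omega) v hv)
  -- triangularity
  have tri : ∀ i, i ≤ d → ∀ s : Finset ℕ, i ∉ s → (∀ j ∈ s, j ≤ d) → ∀ v ∈ U i,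
      (aeval A (∏ j ∈ s, (X - C (θ j)))) v - (∏ j ∈ s, (θ i - θ j)) • v ∈ W (i+1) := by
    intro i hi s
    induction s using Finset.induction_on with
    | empty => intro _ _ v hv; simp
    | insert a s ha ih =>
      intro hins hsd v hv
      have hia : i ∉ s := fun h => hins (Finset.mem_insert_of_mem h)
      have hsd' : ∀ j ∈ s, j ≤ d := fun j hj => hsd j (Finset.mem_insert_of_mem hj)
      have hw := ih hia hsd' v hv
      set u := (aeval A (∏ j ∈ s, (X - C (θ j)))) v with hu
      set c := ∏ j ∈ s, (θ i - θ j) with hc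
      set w := u - c • v with hwdef
      rw [Finset.prod_insert ha, Finset.prod_insert ha, map_mul, Module.End.mul_apply,
        ← hu, haev]
      have hueq : u = w + c • v := by rw [hwdef]; abel
      have hgoal : A u - θ a • u - ((θ i - θ a) * c) • v
          = (A w - θ a • w) + c • (A v - θ i • v) := by
        rw [hueq, map_add, map_smul]
        module
      rw [hgoal]
      refine Submodule.add_mem _ (Submodule.sub_mem _ (hWA _ _ hw)
        (Submodule.smul_mem _ _ hw)) (Submodule.smul_mem _ _ ?_)
      exact hUleW (i+1) (i+1) le_rfl (by omega) (hA i hi v hv)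
  -- disjointness of U i and W (i+1)
  have hdisjU : ∀ i, i ≤ d → Disjoint (U i) (W (i+1)) := by
    intro i hi
    have h := hUdirect.submodule_iSupIndep ⟨i, by omega⟩
    refine h.mono_right ?_
    refine iSup₂_le fun j hj => ?_
    rw [Finset.mem_Icc] at hj
    exact le_iSup₂ (f := fun (k : Fin (d+1)) (_ : k ≠ ⟨i, by omega⟩) => U k.1)
      ⟨j, by omega⟩ (by simp [Fin.ext_iff]; omega)
  -- the lower bound on eigenspace dimensions
  have hle : ∀ i, i ≤ d → Module.finrank F (U i) ≤ Module.finrank F (E i) := by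
    intro i hi
    set qp : Polynomial F := ∏ j ∈ (Finset.range (d+1)).erase i, (X - C (θ j)) with hqp
    have himem : i ∈ Finset.range (d+1) := Finset.mem_range.mpr (by omega)
    have himg : ∀ v ∈ U i, (aeval A qp) v ∈ E i := by
      intro v hv
      rw [hE, Module.End.mem_eigenspace_iff, ← sub_eq_zero, ← haev, ← Module.End.mul_apply,
        ← map_mul, hqp, Finset.mul_prod_erase (Finset.range (d+1)) (fun j => X - C (θ j)) himem]
      have hsplit : (∏ j ∈ Finset.range (d+1), (X - C (θ j)))
          = (∏ j ∈ Finset.Ico 0 i, (X - C (θ j))) * ∏ j ∈ Finset.Icc i d, (X - C (θ j)) := by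
        rw [← Finset.Ico_add_one_right_eq_Icc, Finset.prod_Ico_consecutive _ (Nat.zero_le i) (by omega),
          Finset.range_eq_Ico]
      rw [hsplit, map_mul, Module.End.mul_apply, key (d - i) i hi le_rfl v hv, map_zero]
    have hinj : ∀ v ∈ U i, (aeval A qp) v = 0 → v = 0 := by
      intro v hv hq0
      set c := ∏ j ∈ (Finset.range (d+1)).erase i, (θ i - θ j) with hc
      have hcne : c ≠ 0 := by
        rw [hc]
        refine Finset.prod_ne_zero_iff.mpr fun j hj => ?_
        rw [Finset.mem_erase, Finset.mem_range] at hj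
        exact sub_ne_zero.mpr (hθ i j hi (by omega) (Ne.symm hj.1))
      have htri := tri i hi ((Finset.range (d+1)).erase i) (Finset.notMem_erase i _)
        (fun j hj => by rw [Finset.mem_erase, Finset.mem_range] at hj; omega) v hv
      rw [← hqp, hq0, zero_sub, ← hc] at htri
      have hcv : c • v ∈ W (i+1) := by
        have := Submodule.neg_mem _ htri; rwa [neg_neg] at this
      have : c • v ∈ (⊥ : Submodule F V) :=
        (hdisjU i hi).le_bot ⟨Submodule.smul_mem _ _ hv, hcv⟩
      rw [Submodule.mem_bot, smul_eq_zero] at this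
      exact this.resolve_left hcne
    let f : U i →ₗ[F] E i :=
      LinearMap.codRestrict _ ((aeval A qp).domRestrict (U i)) (fun x => himg x x.2)
    have hfinj : Function.Injective f := by
      rw [← LinearMap.ker_eq_bot]
      apply LinearMap.ker_eq_bot'.mpr
      intro x hx
      exact Subtype.ext (hinj x x.2 (congrArg Subtype.val hx))
    exact LinearMap.finrank_le_finrank_of_injective hfinj
  -- eigenspaces independent over Fin (d+1)
  have hθinj : Function.Injective (fun i : Fin (d+1) => θ i.1) := by
    intro i j hij
    by_contra hne
    exact hθ i.1 j.1 (by omega) (by omega) (fun h => hne (Fin.ext h)) hij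
  have hind : iSupIndep (fun i : Fin (d+1) => E i.1) :=
    (Module.End.eigenspaces_iSupIndep A).comp hθinj
  -- the biSup equals the Fin-indexed iSup
  have hSeq : (⨆ i ∈ Finset.range (d + 1), E i) = ⨆ i : Fin (d+1), E i.1 := by
    apply le_antisymm
    · exact iSup₂_le fun i hi => le_iSup (fun j : Fin (d+1) => E j.1)
        ⟨i, Finset.mem_range.mp hi⟩
    · exact iSup_le fun i => le_iSup₂ (f := fun i (_ : i ∈ Finset.range (d+1)) => E i) i.1
        (Finset.mem_range.mpr i.2)
  -- dimension counting
  have hrankS : Module.finrank F ↥(⨆ i ∈ Finset.range (d + 1), E i)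
      = ∑ i ∈ Finset.range (d+1), Module.finrank F (E i) := by
    rw [hSeq, ← Fin.sum_univ_eq_sum_range (fun i => Module.finrank F (E i)) (d+1)]
    have h1 := aux_finrank_biSup (fun i : Fin (d+1) => E i.1) hind Finset.univ
    have h2 : (⨆ i ∈ (Finset.univ : Finset (Fin (d+1))), E i.1) = ⨆ i : Fin (d+1), E i.1 := by
      simp
    rw [h2] at h1
    exact h1
  have hrankV : Module.finrank F V = ∑ i ∈ Finset.range (d+1), Module.finrank F (U i) := by
    have h1 := aux_finrank_biSup (fun i : Fin (d+1) => U i.1)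
      hUdirect.submodule_iSupIndep Finset.univ
    have h2 : (⨆ i ∈ (Finset.univ : Finset (Fin (d+1))), U i.1) = ⊤ := by
      simpa using hUdirect.submodule_iSup_eq_top
    rw [h2] at h1
    rw [← finrank_top F V, h1, ← Fin.sum_univ_eq_sum_range (fun i => Module.finrank F (U i)) (d+1)]
  have hsle : ∑ i ∈ Finset.range (d+1), Module.finrank F (E i) ≤ Module.finrank F V := by
    rw [← hrankS]; exact Submodule.finrank_le _
  have hsge : ∑ i ∈ Finset.range (d+1), Module.finrank F (U i)
      ≤ ∑ i ∈ Finset.range (d+1), Module.finrank F (E i) :=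
    Finset.sum_le_sum fun i hi => hle i (by rw [Finset.mem_range] at hi; omega)
  have hsum_eq : ∑ i ∈ Finset.range (d+1), Module.finrank F (E i) = Module.finrank F V := by
    omega
  have htop : (⨆ i ∈ Finset.range (d + 1), E i) = ⊤ :=
    Submodule.eq_top_of_finrank_eq (by rw [hrankS, hsum_eq])
  have heach : ∀ i ∈ Finset.range (d+1), Module.finrank F (U i) = Module.finrank F (E i) :=
    (Finset.sum_eq_sum_iff_of_le
      (fun i hi => hle i (by rw [Finset.mem_range] at hi; omega))).mp (by omega)
  refine ⟨htop, ?_, ?_, ?_⟩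
  · intro i hi
    rw [Module.End.hasEigenvalue_iff]
    intro hbot
    have h0 : Module.finrank F (E i) = 0 := by
      rw [show E i = ⊥ from hbot, finrank_bot]
    have hU0 : Module.finrank F (U i) = 0 := by
      have := heach i (Finset.mem_range.mpr (by omega)); omega
    exact hUne i hi (Submodule.finrank_eq_zero.mp hU0)
  · intro μ hμ
    by_contra hcon
    push_neg at hcon
    have hdisj : Disjoint (Module.End.eigenspace A μ)
        (⨆ i ∈ Finset.range (d + 1), E i) := by
      refine ((Module.End.eigenspaces_iSupIndep A) μ).mono_right ?_
      refine iSup₂_le fun i hi => ?_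
      rw [Finset.mem_range] at hi
      exact le_iSup₂ (f := fun (ν : F) (_ : ν ≠ μ) => Module.End.eigenspace A ν) (θ i)
        (fun h => hcon i (by omega) h.symm)
    rw [htop, disjoint_top] at hdisj
    exact hμ hdisj
  · intro i hi
    exact (heach i (Finset.mem_range.mpr (by omega))).symm
end

section
/- Let V be a finite-dimensional vector space over a field F, θ_0, …, θ_d mutually distinct scalars, and U_0, …, U_d subspaces with V = ⊕_{i=0}^d U_i. Let A ∈ End(V) satisfy (A − θ_i)U_i ⊆ U_{i+1} (U_{d+1} = 0), so that A is diagonalizable with eigenvalues among θ_0, …, θ_d; let E_iV denote the eigenspace of A for θ_i. Then for every 0 ≤ i ≤ d, E_iV + E_{i+1}V + ⋯ + E_dV = U_i + U_{i+1} + ⋯ + U_d. -/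
theorem stmt_6 {F V : Type*} [Field F] [AddCommGroup V] [Module F V]
    [FiniteDimensional F V] (d : ℕ) (A : Module.End F V) (θ : ℕ → F)
    (hθ : ∀ i j : ℕ, i ≤ d → j ≤ d → i ≠ j → θ i ≠ θ j)
    (U : ℕ → Submodule F V)
    (hUdirect : DirectSum.IsInternal (fun i : Fin (d + 1) => U i))
    (hUd1 : U (d + 1) = ⊥)
    (hA : ∀ i : ℕ, i ≤ d → ∀ v ∈ U i, A v - θ i • v ∈ U (i + 1)) :
    ∀ i : ℕ, i ≤ d →
      (⨆ j ∈ Finset.Icc i d, Module.End.eigenspace A (θ j)) =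
        ⨆ j ∈ Finset.Icc i d, U j := by
  set E : ℕ → Submodule F V := fun j => Module.End.eigenspace A (θ j) with hE
  set S : ℕ → Submodule F V := fun i => ⨆ j ∈ Finset.Icc i d, E j with hSdef
  set W : ℕ → Submodule F V := fun i => ⨆ j ∈ Finset.Icc i d, U j with hWdef
  have hSmono : ∀ i j : ℕ, i ≤ j → S j ≤ S i := by
    intro i j hij
    exact biSup_mono (fun k hk => Finset.mem_Icc.mpr
      ⟨hij.trans (Finset.mem_Icc.mp hk).1, (Finset.mem_Icc.mp hk).2⟩)
  have hWmono : ∀ i j : ℕ, i ≤ j → W j ≤ W i := by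
    intro i j hij
    exact biSup_mono (fun k hk => Finset.mem_Icc.mpr
      ⟨hij.trans (Finset.mem_Icc.mp hk).1, (Finset.mem_Icc.mp hk).2⟩)
  have hUleW : ∀ j : ℕ, j ≤ d → ∀ i : ℕ, i ≤ j → U j ≤ W i := by
    intro j hj i hij
    exact le_iSup₂_of_le j (Finset.mem_Icc.mpr ⟨hij, hj⟩) le_rfl
  have hEleS : ∀ j : ℕ, j ≤ d → ∀ i : ℕ, i ≤ j → E j ≤ S i := by
    intro j hj i hij
    exact le_iSup₂_of_le j (Finset.mem_Icc.mpr ⟨hij, hj⟩) le_rfl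
  -- Step W : (A - θ m) maps W m into W (m+1)
  have hWstep : ∀ m : ℕ, ∀ v ∈ W m, A v - θ m • v ∈ W (m + 1) := by
    intro m v hv
    refine Submodule.iSup_induction
      (fun j : ℕ => ⨆ _ : j ∈ Finset.Icc m d, U j)
      (motive := fun x => A x - θ m • x ∈ W (m + 1)) hv ?_ ?_ ?_
    · intro l x hx
      by_cases hl : l ∈ Finset.Icc m d
      · simp only [iSup_pos hl] at hx
        obtain ⟨hml, hld⟩ := Finset.mem_Icc.mp hl
        have h1 : A x - θ l • x ∈ W (m + 1) := by
          rcases eq_or_lt_of_le hld with h | h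
          · have : A x - θ l • x ∈ U (d + 1) := h ▸ hA l hld x hx
            rw [hUd1] at this
            simp [(Submodule.mem_bot F).mp this]
          · exact hUleW (l + 1) h (m + 1) (Nat.succ_le_succ hml) (hA l hld x hx)
        have h2 : (θ l - θ m) • x ∈ W (m + 1) := by
          rcases eq_or_lt_of_le hml with h | h
          · simp [← h]
          · exact Submodule.smul_mem _ _ (hUleW l hld (m + 1) h hx)
        have : A x - θ m • x = (A x - θ l • x) + (θ l - θ m) • x := by
          rw [sub_smul]; abel
        rw [this]
        exact Submodule.add_mem _ h1 h2
      · simp only [iSup_neg hl] at hx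
        simp [(Submodule.mem_bot F).mp hx]
    · simp
    · intro x y hx hy
      have : A (x + y) - θ m • (x + y) = (A x - θ m • x) + (A y - θ m • y) := by
        rw [map_add, smul_add]; abel
      rw [this]
      exact Submodule.add_mem _ hx hy
  -- W 0 = ⊤
  have hWtop : W 0 = ⊤ := by
    rw [eq_top_iff, ← hUdirect.submodule_iSup_eq_top]
    refine iSup_le fun i => ?_
    exact hUleW i.1 (Nat.lt_succ_iff.mp i.2) 0 (Nat.zero_le _)
  -- Step D : E j ≤ W j
  have hEleW : ∀ j : ℕ, j ≤ d → E j ≤ W j := by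
    intro j hj v hv
    have hv' : A v = θ j • v := Module.End.mem_eigenspace_iff.mp hv
    have key : ∀ m : ℕ, m ≤ j → (∏ k ∈ Finset.range m, (θ j - θ k)) • v ∈ W m := by
      intro m
      induction m with
      | zero => intro _; simp [hWtop]
      | succ n ih =>
        intro hn
        have hn' : n ≤ j := Nat.le_of_succ_le hn
        have h1 := hWstep n _ (ih hn')
        have h2 : A ((∏ k ∈ Finset.range n, (θ j - θ k)) • v)
            - θ n • ((∏ k ∈ Finset.range n, (θ j - θ k)) • v)
            = (∏ k ∈ Finset.range (n + 1), (θ j - θ k)) • v := by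
          rw [map_smul, hv', Finset.prod_range_succ]
          rw [smul_comm, ← sub_smul, ← smul_assoc, smul_eq_mul, mul_comm]
        rwa [h2] at h1
    have hprod : (∏ k ∈ Finset.range j, (θ j - θ k)) ≠ 0 := by
      refine Finset.prod_ne_zero_iff.mpr fun k hk => ?_
      have hkj : k < j := Finset.mem_range.mp hk
      exact sub_ne_zero_of_ne (hθ j k hj (le_of_lt (lt_of_lt_of_le hkj hj)) (Nat.ne_of_gt hkj))
    have := key j le_rfl
    have : (∏ k ∈ Finset.range j, (θ j - θ k))⁻¹ •
        ((∏ k ∈ Finset.range j, (θ j - θ k)) • v) ∈ W j :=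
      Submodule.smul_mem _ _ this
    rwa [← smul_assoc, smul_eq_mul, inv_mul_cancel₀ hprod, one_smul] at this
  -- Step B : (A - θ i) is surjective on S (i+1), for i ≤ d
  have hsurj : ∀ i : ℕ, i ≤ d → ∀ w ∈ S (i + 1),
      ∃ w' ∈ S (i + 1), A w' - θ i • w' = w := by
    intro i hi w hw
    refine Submodule.iSup_induction
      (fun j : ℕ => ⨆ _ : j ∈ Finset.Icc (i + 1) d, E j)
      (motive := fun x => ∃ w' ∈ S (i + 1), A w' - θ i • w' = x) hw ?_ ?_ ?_
    · intro j x hx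
      by_cases hjm : j ∈ Finset.Icc (i + 1) d
      · simp only [iSup_pos hjm] at hx
        obtain ⟨hij, hjd⟩ := Finset.mem_Icc.mp hjm
        have hne : θ j - θ i ≠ 0 :=
          sub_ne_zero_of_ne (hθ j i hjd hi (by omega))
        refine ⟨(θ j - θ i)⁻¹ • x, ?_, ?_⟩
        · exact Submodule.smul_mem _ _ (hEleS j hjd (i + 1) hij hx)
        · have hax : A x = θ j • x := Module.End.mem_eigenspace_iff.mp hx
          rw [map_smul, hax, smul_comm ((θ j - θ i)⁻¹) (θ j), ← sub_smul,
            smul_smul, mul_inv_cancel₀ hne, one_smul]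
      · simp only [iSup_neg hjm] at hx
        exact ⟨0, Submodule.zero_mem _, by simp [(Submodule.mem_bot F).mp hx]⟩
    · exact ⟨0, Submodule.zero_mem _, by simp⟩
    · rintro x y ⟨wx, hwx, hwx'⟩ ⟨wy, hwy, hwy'⟩
      refine ⟨wx + wy, Submodule.add_mem _ hwx hwy, ?_⟩
      rw [map_add, smul_add, ← hwx', ← hwy']; abel
  -- Step A : U j ≤ S j
  have hUleS : ∀ j : ℕ, j ≤ d → U j ≤ S j := by
    have main : ∀ m : ℕ, ∀ j : ℕ, j ≤ d → d - j ≤ m → U j ≤ S j := by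
      intro m
      induction m with
      | zero =>
        intro j hj hdj
        have hjd : j = d := by omega
        subst hjd
        intro v hv
        have h0 : A v - θ j • v ∈ U (j + 1) := hA j hj v hv
        rw [hUd1] at h0
        have : A v = θ j • v := sub_eq_zero.mp ((Submodule.mem_bot F).mp h0)
        exact hEleS j hj j le_rfl (Module.End.mem_eigenspace_iff.mpr this)
      | succ n ih =>
        intro j hj hdj
        rcases eq_or_lt_of_le hj with h | h
        · subst h
          exact ih j le_rfl (by omega)
        · intro v hv
          have hj1 : j + 1 ≤ d := h
          have h0 : A v - θ j • v ∈ U (j + 1) := hA j hj v hv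
          have h1 : A v - θ j • v ∈ S (j + 1) :=
            ih (j + 1) hj1 (by omega) h0
          obtain ⟨w', hw', hww⟩ := hsurj j hj _ h1
          have hvw : A (v - w') = θ j • (v - w') := by
            have habel : A v - A w' - (θ j • v - θ j • w')
                = (A v - θ j • v) - (A w' - θ j • w') := by abel
            rw [map_sub, smul_sub, ← sub_eq_zero, habel, hww, sub_self]
          have h2 : v - w' ∈ S j :=
            hEleS j hj j le_rfl (Module.End.mem_eigenspace_iff.mpr hvw)
          have h3 : w' ∈ S j := hSmono j (j + 1) (by omega) hw'
          have : v = (v - w') + w' := by abel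
          rw [this]
          exact Submodule.add_mem _ h2 h3
    intro j hj
    exact main (d - j) j hj le_rfl
  intro i hi
  apply le_antisymm
  · refine iSup₂_le fun j hj => ?_
    obtain ⟨hij, hjd⟩ := Finset.mem_Icc.mp hj
    exact (hEleW j hjd).trans (hWmono i j hij)
  · refine iSup₂_le fun j hj => ?_
    obtain ⟨hij, hjd⟩ := Finset.mem_Icc.mp hj
    exact (hUleS j hjd).trans (hSmono i j hij)
end

section
/- Let T be a ring, V a T-module, and v ∈ V a nonzero vector. Let e ∈ T be an idempotent such that the submodule eV generated by the image of e is one-dimensional over the base field and v ∈ eV, v ≠ 0. If W is a proper T-submodule of Tv (the submodule generated by v), then eW = 0. -/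
theorem stmt_7 {F T V : Type*} [Field F] [Ring T] [Algebra F T]
    [AddCommGroup V] [Module F V] [Module T V] [IsScalarTower F T V]
    [FiniteDimensional F V]
    (e : T) (he : e * e = e)
    (E : Submodule F V) (hE : (E : Set V) = Set.range (fun w : V => e • w))
    (hE1 : Module.finrank F E = 1)
    (v : V) (hv : v ∈ E) (hv0 : v ≠ 0)
    (W : Submodule T V) (hW : W < Submodule.span T {v}) :
    ∀ w ∈ W, e • w = 0 := by
  intro w hw
  by_contra hne
  have hewE : e • w ∈ E := by
    have : e • w ∈ (E : Set V) := by
      rw [hE]; exact ⟨w, rfl⟩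
    exact this
  have hEspan : Submodule.span F {v} = E := by
    apply Submodule.eq_of_le_of_finrank_eq
    · exact Submodule.span_le.mpr (Set.singleton_subset_iff.mpr hv)
    · rw [finrank_span_singleton hv0, hE1]
  obtain ⟨c, hc⟩ := Submodule.mem_span_singleton.mp (hEspan ▸ hewE)
  have hc0 : c ≠ 0 := by
    rintro rfl; rw [zero_smul] at hc; exact hne hc.symm
  have hvW : v ∈ W := by
    have : v = (algebraMap F T c⁻¹) • (e • w) := by
      rw [algebraMap_smul, ← hc, smul_smul, inv_mul_cancel₀ hc0, one_smul]
    rw [this]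
    exact W.smul_mem _ (W.smul_mem e hw)
  exact hW.ne (le_antisymm hW.le (Submodule.span_le.mpr (Set.singleton_subset_iff.mpr hvW)))
end

section
/- Let T be an F-algebra, V a T-module which is finite-dimensional over F, e ∈ T an idempotent with eV one-dimensional and eV ≠ 0. Let M = T(eV) be the submodule generated by eV. Then M contains a unique maximal proper T-submodule, namely the sum of all proper T-submodules of M; in particular the sum of any two proper submodules of M is again proper. -/
theorem stmt_8 {F T V : Type*} [Field F] [Ring T] [Algebra F T]
    [AddCommGroup V] [Module F V] [Module T V] [IsScalarTower F T V]
    [FiniteDimensional F V]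
    (e : T) (he : e * e = e)
    (E : Submodule F V) (hE : (E : Set V) = Set.range (fun w : V => e • w))
    (hE1 : Module.finrank F E = 1) (hEne : E ≠ ⊥)
    (M : Submodule T V) (hM : M = Submodule.span T (E : Set V)) :
    (∀ W W' : Submodule T V, W < M → W' < M → W ⊔ W' < M) ∧
    sSup {W : Submodule T V | W < M} < M ∧
    (∀ W : Submodule T V, W < M → W ≤ sSup {W : Submodule T V | W < M}) := by
  -- e acts as identity on E
  have hfix : ∀ x ∈ E, e • x = x := by
    intro x hx
    have : x ∈ (E : Set V) := hx
    rw [hE] at this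
    obtain ⟨w, rfl⟩ := this
    show e • e • w = e • w
    rw [smul_smul, he]
  -- key: proper submodules are killed by e
  have hkey : ∀ W : Submodule T V, W < M → ∀ w ∈ W, e • w = 0 := by
    intro W hW w hw
    by_contra h
    have hmem : e • w ∈ E := by
      rw [SetLike.mem_coe.symm, hE]; exact ⟨w, rfl⟩
    -- E ⊆ W
    have hEW : (E : Set V) ⊆ (W : Set V) := by
      intro x hx
      set v : E := ⟨e • w, hmem⟩ with hv
      have hvne : v ≠ 0 := by
        intro hc
        apply h
        simpa [hv, Subtype.ext_iff] using hc
      have hspan : Submodule.span F {v} = ⊤ := by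
        apply Submodule.eq_top_of_finrank_eq
        rw [finrank_span_singleton hvne, hE1]
      have : (⟨x, hx⟩ : E) ∈ Submodule.span F {v} := by rw [hspan]; trivial
      obtain ⟨c, hc⟩ := Submodule.mem_span_singleton.mp this
      have hx' : x = c • (e • w) := by
        have := congrArg (Subtype.val) hc
        simpa [hv] using this.symm
      rw [hx', algebra_compatible_smul T c (e • w)]
      exact W.smul_mem _ (W.smul_mem _ hw)
    have : M ≤ W := by rw [hM]; exact Submodule.span_le.mpr hEW
    exact absurd (lt_of_lt_of_le hW this) (lt_irrefl W)
  -- a nonzero element of E, inside M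
  obtain ⟨x, hxE, hxne⟩ := Submodule.exists_mem_ne_zero_of_ne_bot hEne
  have hxM : x ∈ M := by
    rw [hM]; exact Submodule.subset_span hxE
  have part1 : ∀ W W' : Submodule T V, W < M → W' < M → W ⊔ W' < M := by
    intro W W' hW hW'
    refine lt_of_le_of_ne (sup_le hW.le hW'.le) ?_
    intro hc
    have : x ∈ W ⊔ W' := hc ▸ hxM
    obtain ⟨a, ha, b, hb, hab⟩ := Submodule.mem_sup.mp this
    have : e • x = 0 := by
      rw [← hab, smul_add, hkey W hW a ha, hkey W' hW' b hb, add_zero]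
    rw [hfix x hxE] at this
    exact hxne this
  refine ⟨part1, ?_, fun W hW => le_sSup hW⟩
  have hMne : (⊥ : Submodule T V) < M := by
    refine bot_lt_iff_ne_bot.mpr ?_
    intro hc
    rw [hc] at hxM; exact hxne (by simpa using hxM)
  have hdir : DirectedOn (· ≤ ·) {W : Submodule T V | W < M} := by
    intro W hW W' hW'
    exact ⟨W ⊔ W', part1 W W' hW hW', le_sup_left, le_sup_right⟩
  refine lt_of_le_of_ne (sSup_le fun W hW => hW.le) ?_
  intro hc
  have hx' : x ∈ sSup {W : Submodule T V | W < M} := by rw [hc]; exact hxM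
  have hne : {W : Submodule T V | W < M}.Nonempty := ⟨⊥, hMne⟩
  obtain ⟨W, hW, hxW⟩ := (Submodule.mem_sSup_of_directed hne hdir).mp hx'
  have := hkey W hW x hxW
  rw [hfix x hxE] at this
  exact hxne this
end

section
/- Let β, γ, ϱ ∈ F and θ_0, …, θ_d mutually distinct elements of a field F such that θ_{i−1} − βθ_i + θ_{i+1} = γ for 1 ≤ i ≤ d−1 and θ_{i−1}^2 − βθ_{i−1}θ_i + θ_i^2 − γ(θ_{i−1}+θ_i) = ϱ for 1 ≤ i ≤ d. Define p(λ,μ) = λ^2 − βλμ + μ^2 − γ(λ+μ) − ϱ. Then for 1 ≤ i ≤ d−1 and any 0 ≤ j ≤ d with |i − j| > 1, p(θ_i, θ_j) ≠ 0. -/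
theorem stmt_13 {F : Type*} [Field F] (d : ℕ) (hd : 2 ≤ d) (θ : ℕ → F)
    (hθ : ∀ i j : ℕ, i ≤ d → j ≤ d → i ≠ j → θ i ≠ θ j)
    (β γ ϱ : F)
    (hrec1 : ∀ i : ℕ, 1 ≤ i → i ≤ d - 1 → θ (i - 1) - β * θ i + θ (i + 1) = γ)
    (hrec2 : ∀ i : ℕ, 1 ≤ i → i ≤ d →
      θ (i - 1) ^ 2 - β * θ (i - 1) * θ i + θ i ^ 2 - γ * (θ (i - 1) + θ i) = ϱ) :
    ∀ i j : ℕ, 1 ≤ i → i ≤ d - 1 → j ≤ d → 1 < |(i : ℤ) - (j : ℤ)| →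
      θ i ^ 2 - β * θ i * θ j + θ j ^ 2 - γ * (θ i + θ j) - ϱ ≠ 0 := by
  intro i j hi1 hid hjd habs
  have h1 := hrec1 i hi1 hid
  have h2 := hrec2 i hi1 (by omega)
  have hfac : θ i ^ 2 - β * θ i * θ j + θ j ^ 2 - γ * (θ i + θ j) - ϱ
      = (θ j - θ (i - 1)) * (θ j - θ (i + 1)) := by
    linear_combination (θ j - θ (i - 1)) * h1 + h2
  rw [hfac]
  have habs' : 1 < (i:ℤ) - j ∨ 1 < -((i:ℤ) - j) := lt_abs.mp habs
  exact mul_ne_zero (sub_ne_zero.mpr (hθ j (i-1) hjd (by omega) (by omega)))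
    (sub_ne_zero.mpr (hθ j (i+1) hjd (by omega) (by omega)))
end

section
/- Let V be a finite-dimensional vector space over a field F, A, A* ∈ End(V), with A* diagonalizable with mutually distinct eigenvalues θ*_0, …, θ*_d and corresponding idempotents E*_i, and suppose there is a decomposition V = ⊕ U_i with (A − θ_i)U_i ⊆ U_{i+1} and (A* − θ*_i)U_i ⊆ U_{i−1}, with E*_0V = U_0 and LR − ζ_1 vanishing on U_0, where R acts as A − θ_0 on U_0 and L acts as A* − θ*_1 on U_1. Then E*_0 A E*_0 = a_0 E*_0 on V, where a_0 = θ_0 + ζ_1/(θ*_0 − θ*_1). -/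
theorem stmt_14 {F V : Type*} [Field F] [AddCommGroup V] [Module F V]
    [FiniteDimensional F V] (d : ℕ) (hd : 1 ≤ d)
    (A B : Module.End F V) (θ θs : ℕ → F)
    (hθ : ∀ i j : ℕ, i ≤ d → j ≤ d → i ≠ j → θ i ≠ θ j)
    (hθs : ∀ i j : ℕ, i ≤ d → j ≤ d → i ≠ j → θs i ≠ θs j)
    (U : ℕ → Submodule F V)
    (hUdirect : DirectSum.IsInternal (fun i : Fin (d + 1) => U i))
    (hUd1 : U (d + 1) = ⊥)
    (hA : ∀ i : ℕ, i ≤ d → ∀ v ∈ U i, A v - θ i • v ∈ U (i + 1))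
    (hB0 : ∀ v ∈ U 0, B v = θs 0 • v)
    (hB : ∀ i : ℕ, 1 ≤ i → i ≤ d → ∀ v ∈ U i, B v - θs i • v ∈ U (i - 1))
    (E0 : Module.End F V) (hE0idem : E0 * E0 = E0)
    (hE0range : LinearMap.range E0 = U 0)
    (hE0B : E0 * B = θs 0 • E0)
    (ζ1 : F) (hζ1 : ∀ w ∈ U 0, B (A w - θ 0 • w) - θs 1 • (A w - θ 0 • w) = ζ1 • w) :
    E0 * A * E0 = (θ 0 + ζ1 / (θs 0 - θs 1)) • E0 := by
  have hne : θs 0 - θs 1 ≠ 0 := sub_ne_zero.mpr (hθs 0 1 (Nat.zero_le d) hd (by decide))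
  ext v
  simp only [Module.End.mul_apply, LinearMap.smul_apply]
  set w := E0 v with hw
  have hwU : w ∈ U 0 := hE0range ▸ LinearMap.mem_range_self E0 v
  have hE0w : E0 w = w := by
    have := congrArg (fun f => f v) hE0idem
    simpa [Module.End.mul_apply] using this
  set r := A w - θ 0 • w with hr
  have h1 : E0 (B r) = θs 0 • E0 r := by
    have := congrArg (fun f => f r) hE0B
    simpa [Module.End.mul_apply] using this
  have h2 : B r - θs 1 • r = ζ1 • w := hζ1 w hwU
  have h3 : (θs 0 - θs 1) • E0 r = ζ1 • w := by
    have h := congrArg E0 h2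
    rw [map_sub, map_smul, map_smul, h1, hE0w] at h
    rw [sub_smul]; exact h
  have h4 : E0 r = (ζ1 / (θs 0 - θs 1)) • w := by
    rw [div_eq_inv_mul, mul_smul, ← h3, inv_smul_smul₀ hne]
  have hAw : A w = r + θ 0 • w := by rw [hr]; abel
  rw [hAw, map_add, map_smul, hE0w, h4, add_comm, ← add_smul]
end

section
/- Let F be a field, and suppose a sharp tridiagonal system Φ over F has eigenvalue sequence {θ_i}, dual eigenvalue sequence {θ*_i}, and split sequence {ζ_i} defined by E*_0 τ_i(A) E*_0 = ζ_i E*_0 / ((θ*_0−θ*_1)⋯(θ*_0−θ*_i)). If E*_0 E_d E*_0 ≠ 0 on V, then ζ_d ≠ 0, where E_d = τ_d(A)/τ_d(θ_d). Conversely, if ζ_d ≠ 0 then E*_0 E_d E*_0 = τ_d(θ_d)^{−1} η*_d(θ*_0)^{−1} ζ_d E*_0 ≠ 0. -/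
open Polynomial Finset

theorem stmt_15 {F V : Type*} [Field F] [AddCommGroup V] [Module F V]
    [FiniteDimensional F V] (d : ℕ)
    (A : Module.End F V) (θ θs : ℕ → F)
    (hθ : ∀ i j : ℕ, i ≤ d → j ≤ d → i ≠ j → θ i ≠ θ j)
    (hθs : ∀ i j : ℕ, i ≤ d → j ≤ d → i ≠ j → θs i ≠ θs j)
    (Es0 : Module.End F V) (hEs0 : Es0 ≠ 0)
    (Ed : Module.End F V)
    (hEd : Ed = (∏ j ∈ Finset.range d, (θ d - θ j))⁻¹ •
      Polynomial.aeval A (∏ j ∈ Finset.range d, (X - C (θ j))))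
    (ζ : ℕ → F)
    (hζ : ∀ i : ℕ, i ≤ d →
      Es0 * Polynomial.aeval A (∏ j ∈ Finset.range i, (X - C (θ j))) * Es0 =
        (ζ i / ∏ j ∈ Finset.Icc 1 i, (θs 0 - θs j)) • Es0) :
    Es0 * Ed * Es0 =
      ((∏ j ∈ Finset.range d, (θ d - θ j))⁻¹ *
        (∏ j ∈ Finset.Icc 1 d, (θs 0 - θs j))⁻¹ * ζ d) • Es0 ∧
    (Es0 * Ed * Es0 ≠ 0 ↔ ζ d ≠ 0) := by
  have hp1 : (∏ j ∈ Finset.range d, (θ d - θ j)) ≠ 0 := by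
    apply Finset.prod_ne_zero_iff.mpr
    intro j hj
    have hj' := Finset.mem_range.mp hj
    exact sub_ne_zero.mpr (hθ d j le_rfl hj'.le (Nat.ne_of_gt hj'))
  have hp2 : (∏ j ∈ Finset.Icc 1 d, (θs 0 - θs j)) ≠ 0 := by
    apply Finset.prod_ne_zero_iff.mpr
    intro j hj
    have hj' := Finset.mem_Icc.mp hj
    exact sub_ne_zero.mpr (hθs 0 j (Nat.zero_le d) hj'.2 (by omega))
  have key : Es0 * Ed * Es0 =
      ((∏ j ∈ Finset.range d, (θ d - θ j))⁻¹ *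
        (∏ j ∈ Finset.Icc 1 d, (θs 0 - θs j))⁻¹ * ζ d) • Es0 := by
    rw [hEd, mul_smul_comm, smul_mul_assoc, hζ d le_rfl, smul_smul]
    congr 1
    field_simp
  refine ⟨key, ?_⟩
  rw [key]
  constructor
  · intro h hz
    exact h (by rw [hz, mul_zero, zero_smul])
  · intro hz h
    apply hEs0
    have hc : ((∏ j ∈ Finset.range d, (θ d - θ j))⁻¹ *
        (∏ j ∈ Finset.Icc 1 d, (θs 0 - θs j))⁻¹ * ζ d) ≠ 0 :=
      mul_ne_zero (mul_ne_zero (inv_ne_zero hp1) (inv_ne_zero hp2)) hz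
    exact (smul_eq_zero.mp h).resolve_left hc
end

section
/- With the notation of a sharp tridiagonal system: E*_0 E_0 E*_0 = η_d(θ_0)^{−1} η*_d(θ*_0)^{−1} (Σ_{i=0}^d η_{d−i}(θ_0) η*_{d−i}(θ*_0) ζ_i) E*_0 on V, where E_0 = η_d(A)/η_d(θ_0). In particular E*_0E_0E*_0 ≠ 0 if and only if Σ_{i=0}^d η_{d−i}(θ_0) η*_{d−i}(θ*_0) ζ_i ≠ 0. -/
open Polynomial Finset

lemma aux_key {F : Type*} [CommRing F] (θ : ℕ → F) : ∀ m : ℕ,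
    (∏ k ∈ Finset.range m, (X - C (θ (k+1)))) =
    ∑ i ∈ Finset.range (m+1), C (∏ k ∈ Finset.range (m-i), (θ 0 - θ (k+i+1))) *
      ∏ j ∈ Finset.range i, (X - C (θ j)) := by
  intro m
  induction m with
  | zero => simp
  | succ m ih =>
    rw [Finset.sum_range_succ, Finset.prod_range_succ]
    have h1 : ∀ i ∈ Finset.range (m+1),
        C (∏ k ∈ Finset.range (m+1-i), (θ 0 - θ (k+i+1))) *
          ∏ j ∈ Finset.range i, (X - C (θ j)) =
        C (θ 0 - θ (m+1)) * (C (∏ k ∈ Finset.range (m-i), (θ 0 - θ (k+i+1))) *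
          ∏ j ∈ Finset.range i, (X - C (θ j))) := by
      intro i hi
      rw [Finset.mem_range] at hi
      have : m + 1 - i = (m - i) + 1 := by omega
      rw [this, Finset.prod_range_succ]
      have : m - i + i + 1 = m + 1 := by omega
      rw [this, C_mul]
      ring
    rw [Finset.sum_congr rfl h1, ← Finset.mul_sum, ← ih]
    simp only [Nat.sub_self, Finset.range_zero, Finset.prod_empty, map_one, one_mul]
    rw [Finset.prod_range_succ' (fun j => X - C (θ j)) m]
    have hC : (C (θ 0 - θ (m+1)) : F[X]) = C (θ 0) - C (θ (m+1)) := by simp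
    rw [hC]; ring

lemma aux_reflect {F : Type*} [CommRing F] (θ : ℕ → F) (d i : ℕ) (hi : i ≤ d) :
    (∏ k ∈ Finset.range (d-i), (θ 0 - θ (k+i+1))) =
    ∏ j ∈ Finset.range (d-i), (θ 0 - θ (d-j)) := by
  rw [← Finset.prod_range_reflect (fun k => θ 0 - θ (k+i+1)) (d-i)]
  refine Finset.prod_congr rfl fun j hj => ?_
  rw [Finset.mem_range] at hj
  congr 2
  omega

lemma aux_icc {F : Type*} [CommRing F] (f : ℕ → F) (d i : ℕ) (hi : i ≤ d) :
    (∏ j ∈ Finset.Icc 1 i, f j) * ∏ k ∈ Finset.range (d-i), f (k+i+1) =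
    ∏ j ∈ Finset.Icc 1 d, f j := by
  have h1 : ∏ k ∈ Finset.range (d-i), f (k+i+1) = ∏ j ∈ Finset.Ioc i d, f j := by
    have h2 : Finset.Ioc i d = Finset.Ico (i+1) (d+1) := by ext x; simp
    rw [h2, Finset.prod_Ico_eq_prod_range]
    refine Finset.prod_congr (by congr 1; omega) fun k _ => by congr 1; omega
  have h3 : Finset.Icc 1 i = Finset.Ioc 0 i := by ext x; simp; omega
  have h4 : Finset.Icc 1 d = Finset.Ioc 0 d := by ext x; simp; omega
  rw [h1, h3, h4, Finset.prod_Ioc_consecutive f (Nat.zero_le i) hi]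

theorem stmt_16 {F V : Type*} [Field F] [AddCommGroup V] [Module F V]
    [FiniteDimensional F V] (d : ℕ)
    (A : Module.End F V) (θ θs : ℕ → F)
    (hθ : ∀ i j : ℕ, i ≤ d → j ≤ d → i ≠ j → θ i ≠ θ j)
    (hθs : ∀ i j : ℕ, i ≤ d → j ≤ d → i ≠ j → θs i ≠ θs j)
    (Es0 : Module.End F V) (hEs0 : Es0 ≠ 0)
    (E0 : Module.End F V)
    (hE0 : E0 = ((∏ j ∈ Finset.range d, (θ 0 - θ (d - j)))⁻¹ •
      Polynomial.aeval A (∏ j ∈ Finset.range d, (X - C (θ (d - j))))))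
    (ζ : ℕ → F)
    (hζ : ∀ i : ℕ, i ≤ d →
      Es0 * Polynomial.aeval A (∏ j ∈ Finset.range i, (X - C (θ j))) * Es0 =
        (ζ i / ∏ j ∈ Finset.Icc 1 i, (θs 0 - θs j)) • Es0) :
    Es0 * E0 * Es0 =
      ((∏ j ∈ Finset.range d, (θ 0 - θ (d - j)))⁻¹ *
        (∏ j ∈ Finset.Icc 1 d, (θs 0 - θs j))⁻¹ *
        (∑ i ∈ Finset.range (d + 1),
          (∏ j ∈ Finset.range (d - i), (θ 0 - θ (d - j))) *
          (∏ j ∈ Finset.range (d - i), (θs 0 - θs (d - j))) * ζ i)) • Es0 ∧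
    (Es0 * E0 * Es0 ≠ 0 ↔
      (∑ i ∈ Finset.range (d + 1),
        (∏ j ∈ Finset.range (d - i), (θ 0 - θ (d - j))) *
        (∏ j ∈ Finset.range (d - i), (θs 0 - θs (d - j))) * ζ i) ≠ 0) := by
  set η : F := ∏ j ∈ Finset.range d, (θ 0 - θ (d - j)) with hη
  set ηs : F := ∏ j ∈ Finset.Icc 1 d, (θs 0 - θs j) with hηs
  set S : F := ∑ i ∈ Finset.range (d + 1),
      (∏ j ∈ Finset.range (d - i), (θ 0 - θ (d - j))) *
      (∏ j ∈ Finset.range (d - i), (θs 0 - θs (d - j))) * ζ i with hS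
  have hηne : η ≠ 0 := by
    rw [hη]
    refine Finset.prod_ne_zero_iff.mpr fun j hj => ?_
    rw [Finset.mem_range] at hj
    exact sub_ne_zero.mpr (hθ 0 (d - j) (Nat.zero_le d) (by omega) (by omega))
  have hηsne : ηs ≠ 0 := by
    rw [hηs]
    refine Finset.prod_ne_zero_iff.mpr fun j hj => ?_
    rw [Finset.mem_Icc] at hj
    exact sub_ne_zero.mpr (hθs 0 j (Nat.zero_le d) (by omega) (by omega))
  -- the polynomial product rewritten
  have hprod : (∏ j ∈ Finset.range d, (X - C (θ (d - j)))) =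
      ∏ k ∈ Finset.range d, (X - C (θ (k+1))) := by
    rw [← Finset.prod_range_reflect (fun k => X - C (θ (k+1))) d]
    refine Finset.prod_congr rfl fun j hj => ?_
    rw [Finset.mem_range] at hj
    congr 3
    omega
  have key : Es0 * E0 * Es0 = (η⁻¹ * ηs⁻¹ * S) • Es0 := by
    rw [hE0, hprod, aux_key θ d]
    rw [map_sum]
    have step : Es0 * (η⁻¹ • ∑ i ∈ Finset.range (d+1),
        (Polynomial.aeval A) (C (∏ k ∈ Finset.range (d-i), (θ 0 - θ (k+i+1))) *
          ∏ j ∈ Finset.range i, (X - C (θ j)))) * Es0 =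
        η⁻¹ • ∑ i ∈ Finset.range (d+1),
          ((∏ k ∈ Finset.range (d-i), (θ 0 - θ (k+i+1))) *
            (ζ i / ∏ j ∈ Finset.Icc 1 i, (θs 0 - θs j))) • Es0 := by
      rw [Algebra.mul_smul_comm, Algebra.smul_mul_assoc]
      congr 1
      rw [Finset.mul_sum, Finset.sum_mul]
      refine Finset.sum_congr rfl fun i hi => ?_
      rw [Finset.mem_range] at hi
      rw [map_mul, aeval_C]
      have : Es0 * ((algebraMap F (Module.End F V)) (∏ k ∈ Finset.range (d-i), (θ 0 - θ (k+i+1))) *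
          (Polynomial.aeval A) (∏ j ∈ Finset.range i, (X - C (θ j)))) * Es0 =
          (∏ k ∈ Finset.range (d-i), (θ 0 - θ (k+i+1))) •
            (Es0 * (Polynomial.aeval A) (∏ j ∈ Finset.range i, (X - C (θ j))) * Es0) := by
        rw [Algebra.algebraMap_eq_smul_one]
        rw [smul_one_mul, Algebra.mul_smul_comm, Algebra.smul_mul_assoc]
      rw [this, hζ i (by omega), smul_smul]
    rw [step, ← Finset.sum_smul, smul_smul, mul_assoc]
    congr 2
    rw [hS, Finset.mul_sum]
    refine Finset.sum_congr rfl fun i hi => ?_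
    rw [Finset.mem_range] at hi
    have hid : i ≤ d := by omega
    have hDne : (∏ j ∈ Finset.Icc 1 i, (θs 0 - θs j)) ≠ 0 := by
      refine Finset.prod_ne_zero_iff.mpr fun j hj => ?_
      rw [Finset.mem_Icc] at hj
      exact sub_ne_zero.mpr (hθs 0 j (Nat.zero_le d) (by omega) (by omega))
    have hQne : (∏ k ∈ Finset.range (d-i), (θs 0 - θs (k+i+1))) ≠ 0 := by
      refine Finset.prod_ne_zero_iff.mpr fun k hk => ?_
      rw [Finset.mem_range] at hk
      exact sub_ne_zero.mpr (hθs 0 (k+i+1) (Nat.zero_le d) (by omega) (by omega))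
    rw [← aux_reflect θ d i hid, ← aux_reflect θs d i hid, hηs,
      ← aux_icc (fun j => θs 0 - θs j) d i hid]
    field_simp
  refine ⟨key, ?_⟩
  rw [key, smul_ne_zero_iff]
  constructor
  · rintro ⟨h, -⟩
    intro hS0
    exact h (by rw [hS0, mul_zero])
  · intro h
    exact ⟨mul_ne_zero (mul_ne_zero (inv_ne_zero hηne) (inv_ne_zero hηsne)) h, hEs0⟩
end

section
/- Let F be a field, d ≥ 1, q nonzero with q^{2i} ≠ 1 for 1 ≤ i ≤ d, b, b*, c, c* ∈ F, and suppose θ_i = a + bq^{2i−d} + cq^{d−2i}, θ*_i = a* + b*q^{2i−d} + c*q^{d−2i}. Then (θ*_1 − θ*_d)(θ_{d−1} − θ_d) − (θ*_0 − θ*_1)(θ_0 − θ_{d−1}) = (q − q^{−1})(q^{d−1} − q^{1−d})(q^d − q^{−d})(bb* − cc*). -/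
theorem stmt_17 {F : Type*} [Field F] (d : ℕ) (hd : 1 ≤ d)
    (q a b c as bs cs : F) (hq : q ≠ 0)
    (θ θs : ℕ → F)
    (hθ : ∀ i : ℕ, i ≤ d → θ i = a + b * q ^ (2 * (i : ℤ) - (d : ℤ)) + c * q ^ ((d : ℤ) - 2 * (i : ℤ)))
    (hθs : ∀ i : ℕ, i ≤ d → θs i = as + bs * q ^ (2 * (i : ℤ) - (d : ℤ)) + cs * q ^ ((d : ℤ) - 2 * (i : ℤ))) :
    (θs 1 - θs d) * (θ (d - 1) - θ d) - (θs 0 - θs 1) * (θ 0 - θ (d - 1)) =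
      (q - q⁻¹) * (q ^ ((d : ℤ) - 1) - q ^ (1 - (d : ℤ))) * (q ^ (d : ℤ) - q ^ (-(d : ℤ))) *
        (b * bs - c * cs) := by
  have hcast : ((d - 1 : ℕ) : ℤ) = (d : ℤ) - 1 := by
    omega
  rw [hθ 0 (Nat.zero_le d), hθ (d-1) (Nat.sub_le d 1), hθ d le_rfl,
    hθs 0 (Nat.zero_le d), hθs 1 hd, hθs d le_rfl, hcast]
  push_cast
  have e1 : ((0:ℤ) - d) = -(d:ℤ) := by ring
  have e2 : ((d:ℤ) - 0) = (d:ℤ) := by ring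
  have e5 : (2 * ((d:ℤ) - 1) - d) = (d:ℤ) - 2 := by ring
  have e6 : ((d:ℤ) - 2 * ((d:ℤ) - 1)) = 2 - (d:ℤ) := by ring
  have e7 : (2 * (d:ℤ) - d) = (d:ℤ) := by ring
  have e8 : ((d:ℤ) - 2 * d) = -(d:ℤ) := by ring
  rw [e1, e2, e5, e6, e7, e8]
  have hu : q ^ (d:ℤ) ≠ 0 := zpow_ne_zero _ hq
  have f1 : q ^ ((2:ℤ) - d) = q * q / q ^ (d:ℤ) := by
    rw [zpow_sub₀ hq, zpow_two]
  have f2 : q ^ ((d:ℤ) - 2) = q ^ (d:ℤ) / (q * q) := by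
    rw [zpow_sub₀ hq, zpow_two]
  have f3 : q ^ ((d:ℤ) - 1) = q ^ (d:ℤ) / q := by
    rw [zpow_sub₀ hq, zpow_one]
  have f4 : q ^ ((1:ℤ) - d) = q / q ^ (d:ℤ) := by
    rw [zpow_sub₀ hq, zpow_one]
  have f5 : q ^ (-(d:ℤ)) = 1 / q ^ (d:ℤ) := by
    rw [zpow_neg]; exact (one_div _).symm
  rw [f1, f2, f3, f4, f5]
  generalize q ^ (d:ℤ) = u at hu ⊢
  field_simp
  ring
end
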